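/- Let G be a connected graph, r a vertex (root), x a vertex (source), and v ≠ x. Then γ→(v) = max over u ∈ I(x,v) ∩ N(v) with d(r,u) = d(r,v) of (1 + γ(u)), where γ(u) is the maximum over isometric (x,u)-paths P of the minimum number of r-rooted isometric paths needed to cover the vertices of P, and γ→(v) is that same maximum restricted to isometric (x,v)-paths whose vertex adjacent to v (second-to-last vertex) is at distance d(r,v) from r. (If the defining set is empty both sides are 0, with the convention that max over the empty set is 0.) -/

import Mathlib

open SimpleGraph

variable {V : Type*}

/-- One step of the BFS DAG `G_r`: the edge `ab` is oriented from `a` to `b`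
(toward the root `r`), i.e. `d(r,b) = d(r,a) - 1`. -/
def dagStep (G : SimpleGraph V) (r a b : V) : Prop :=
  G.Adj a b ∧ G.dist r a = G.dist r b + 1

/-- Reachability by a directed path in the BFS DAG `G_r`. -/
def dagReach (G : SimpleGraph V) (r a b : V) : Prop :=
  Relation.ReflTransGen (dagStep G r) a b

/-- A finite set of vertices is an antichain with respect to the root `r`:
its vertices are pairwise unreachable in the BFS DAG `G_r`. -/
def IsAntichainSet (G : SimpleGraph V) (r : V) (A : Finset V) : Prop :=
  ∀ a ∈ A, ∀ b ∈ A, a ≠ b → ¬ dagReach G r a b ∧ ¬ dagReach G r b a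

/-- A walk is an isometric path: a shortest path between its endpoints. -/
def IsIsometricPath (G : SimpleGraph V) {u v : V} (p : G.Walk u v) : Prop :=
  p.IsPath ∧ p.length = G.dist u v

/-- The vertices of `p` can be covered by at most `k` many `r`-rooted isometric paths. -/
def CoveredBy (G : SimpleGraph V) (r : V) {x y : V} (p : G.Walk x y) (k : ℕ) : Prop :=
  ∃ s : Finset (Σ v : V, G.Walk r v), s.card ≤ k ∧
    (∀ q ∈ s, IsIsometricPath G q.2) ∧
    ∀ a ∈ p.support, ∃ q ∈ s, a ∈ q.2.support
/-- The minimum number of `r`-rooted isometric paths needed to cover the vertices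
of the path `p` (denoted `|C_r(p)|`). -/
noncomputable def coverNum (G : SimpleGraph V) (r : V) {x y : V} (p : G.Walk x y) : ℕ :=
  sInf {k | CoveredBy G r p k}

open Classical in
/-- `γ(u)` (w.r.t. root `r` and source `x`): the maximum of `|C_r(P)|` over all
isometric `(x,u)`-paths `P`, with the convention `γ(x,x) = 1`. -/
noncomputable def gammaFn (G : SimpleGraph V) (r x u : V) : ℕ :=
  if x = u then 1
  else sSup {n | ∃ p : G.Walk x u, IsIsometricPath G p ∧ n = coverNum G r p}

/-- `γ→(v)`: the maximum of `|C_r(P)|` over isometric `(x,v)`-paths `P` whose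
second-to-last vertex is at distance `d(r,v)` from `r`. -/
noncomputable def gammaRight (G : SimpleGraph V) (r x v : V) : ℕ :=
  sSup {n | ∃ p : G.Walk x v, IsIsometricPath G p ∧
    G.dist r (p.getVert (p.length - 1)) = G.dist r v ∧ n = coverNum G r p}

/-- The interval `I(x,v)`: vertices lying on some isometric `(x,v)`-path. -/
def interval (G : SimpleGraph V) (x v : V) : Set V :=
  {w | ∃ p : G.Walk x v, IsIsometricPath G p ∧ w ∈ p.support}

section Aux

variable {G : SimpleGraph V}

private lemma aux_dist_start_getVert_le (hG : G.Connected) {u v : V} (p : G.Walk u v) (i : ℕ) :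
    G.dist u (p.getVert i) ≤ i := by
  induction p generalizing i with
  | nil => simp [SimpleGraph.Walk.getVert, SimpleGraph.dist_self]
  | @cons a b c h q ih =>
    cases i with
    | zero => simp [SimpleGraph.Walk.getVert_zero]
    | succ j =>
      rw [SimpleGraph.Walk.getVert_cons_succ]
      calc G.dist a (q.getVert j) ≤ G.dist a b + G.dist b (q.getVert j) := hG.dist_triangle
        _ ≤ 1 + j := by
            have h1 : G.dist a b = 1 := SimpleGraph.dist_eq_one_iff_adj.mpr h
            have := ih j
            omega
        _ = j + 1 := by omega

private lemma aux_dist_getVert_end_le {u v : V} (p : G.Walk u v) (i : ℕ) :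
    G.dist (p.getVert i) v ≤ p.length - i := by
  induction p generalizing i with
  | nil => simp [SimpleGraph.Walk.getVert]
  | @cons a b c h q ih =>
    cases i with
    | zero =>
      simpa [SimpleGraph.Walk.getVert_zero] using SimpleGraph.dist_le (SimpleGraph.Walk.cons h q)
    | succ j =>
      rw [SimpleGraph.Walk.getVert_cons_succ]
      simpa [SimpleGraph.Walk.length_cons] using ih j

/-- Positions on an isometric walk realize distances. -/
private lemma aux_getVert_dist (hG : G.Connected) {u v : V} (p : G.Walk u v)
    (hlen : p.length = G.dist u v) {i : ℕ} (hi : i ≤ p.length) :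
    G.dist u (p.getVert i) = i ∧ G.dist (p.getVert i) v = p.length - i := by
  have h1 := aux_dist_start_getVert_le hG p i
  have h2 := aux_dist_getVert_end_le p i
  have h3 : G.dist u v ≤ G.dist u (p.getVert i) + G.dist (p.getVert i) v := hG.dist_triangle
  omega

private lemma aux_dist_getVert_getVert_le (hG : G.Connected) {u v : V} (p : G.Walk u v)
    {i j : ℕ} (hij : i ≤ j) :
    G.dist (p.getVert i) (p.getVert j) ≤ j - i := by
  induction p generalizing i j with
  | nil => simp [SimpleGraph.Walk.getVert, SimpleGraph.dist_self]
  | @cons a b c h q ih =>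
    cases i with
    | zero =>
      cases j with
      | zero => simp
      | succ l =>
        rw [SimpleGraph.Walk.getVert_zero, SimpleGraph.Walk.getVert_cons_succ]
        calc G.dist a (q.getVert l) ≤ G.dist a b + G.dist b (q.getVert l) := hG.dist_triangle
          _ ≤ 1 + l := by
              have h1 : G.dist a b = 1 := SimpleGraph.dist_eq_one_iff_adj.mpr h
              have := aux_dist_start_getVert_le hG q l
              omega
          _ = l + 1 - 0 := by omega
    | succ k =>
      cases j with
      | zero => omega
      | succ l =>
        rw [SimpleGraph.Walk.getVert_cons_succ, SimpleGraph.Walk.getVert_cons_succ]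
        have := ih (i := k) (j := l) (by omega)
        omega

/-- Two vertices on an isometric walk are at distance the difference of positions. -/
private lemma aux_dist_on_iso (hG : G.Connected) {u v : V} (p : G.Walk u v)
    (hlen : p.length = G.dist u v) {i j : ℕ} (hij : i ≤ j) (hj : j ≤ p.length) :
    G.dist (p.getVert i) (p.getVert j) = j - i := by
  have h1 := aux_dist_getVert_getVert_le hG p hij
  have h2 := (aux_getVert_dist hG p hlen (le_trans hij hj)).1
  have h3 := (aux_getVert_dist hG p hlen hj).1
  have h4 : G.dist u (p.getVert j) ≤ G.dist u (p.getVert i) +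
      G.dist (p.getVert i) (p.getVert j) := hG.dist_triangle
  omega

/-- Key disjointness: a rooted isometric path through `v` avoids every vertex of an
isometric `(x,u)`-path, when `d(r,u) = d(r,v)` and `d(x,v) = d(x,u)+1`. -/
private lemma aux_key_disjoint (hG : G.Connected) {x u v r z w : V}
    (q : G.Walk x u) (hq : q.length = G.dist x u)
    (hru : G.dist r u = G.dist r v) (hxv : G.dist x v = G.dist x u + 1)
    (R : G.Walk r z) (hR : R.length = G.dist r z)
    (hvR : v ∈ R.support) (hwR : w ∈ R.support) (hwq : w ∈ q.support) : False := by
  obtain ⟨i, hiq, hiL⟩ := SimpleGraph.Walk.mem_support_iff_exists_getVert.mp hwq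
  obtain ⟨j, hjR, hjL⟩ := SimpleGraph.Walk.mem_support_iff_exists_getVert.mp hvR
  obtain ⟨k, hkR, hkL⟩ := SimpleGraph.Walk.mem_support_iff_exists_getVert.mp hwR
  have hq1 : G.dist x w = i := by
    have := (aux_getVert_dist hG q hq hiL).1; rwa [hiq] at this
  have hq2 : G.dist w u = q.length - i := by
    have := (aux_getVert_dist hG q hq hiL).2; rwa [hiq] at this
  have hrv : G.dist r v = j := by
    have := (aux_getVert_dist hG R hR hjL).1; rwa [hjR] at this
  have hrw : G.dist r w = k := by
    have := (aux_getVert_dist hG R hR hkL).1; rwa [hkR] at this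
  have hvw : G.dist v w = (if j ≤ k then k - j else j - k) := by
    split_ifs with hc
    · have := aux_dist_on_iso hG R hR hc hkL
      rwa [hjR, hkR] at this
    · have := aux_dist_on_iso hG R hR (le_of_not_ge hc) hjL
      rw [hkR, hjR] at this
      rw [SimpleGraph.dist_comm]; exact this
  have t1 : G.dist x v ≤ G.dist x w + G.dist w v := hG.dist_triangle
  have t2 : G.dist r u ≤ G.dist r w + G.dist w u := hG.dist_triangle
  have t3 : G.dist r w ≤ G.dist r u + G.dist u w := hG.dist_triangle
  have c1 : G.dist w v = G.dist v w := SimpleGraph.dist_comm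
  have c2 : G.dist u w = G.dist w u := SimpleGraph.dist_comm
  split_ifs at hvw <;> omega

variable [Fintype V]

/-- Any walk can be covered by at most `|V|` rooted isometric paths. -/
private lemma aux_coveredBy_card (hG : G.Connected) (r : V) {x y : V} (p : G.Walk x y) :
    CoveredBy G r p (Fintype.card V) := by
  classical
  have hsp : ∀ a : V, ∃ q : G.Walk r a, IsIsometricPath G q := by
    intro a
    obtain ⟨q, h1, h2⟩ := hG.exists_path_of_dist r a
    exact ⟨q, h1, h2⟩
  choose sp hsp using hsp
  refine ⟨p.support.toFinset.image (fun a => (⟨a, sp a⟩ : Σ v : V, G.Walk r v)), ?_, ?_, ?_⟩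
  · exact le_trans (Finset.card_image_le) (Finset.card_le_univ _)
  · intro q hq
    obtain ⟨a, _, rfl⟩ := Finset.mem_image.mp hq
    exact hsp a
  · intro a ha
    refine ⟨⟨a, sp a⟩, Finset.mem_image_of_mem _ (List.mem_toFinset.mpr ha), ?_⟩
    exact (sp a).end_mem_support

private lemma aux_coverNum_le_card (hG : G.Connected) (r : V) {x y : V} (p : G.Walk x y) :
    coverNum G r p ≤ Fintype.card V :=
  Nat.sInf_le (aux_coveredBy_card hG r p)

private lemma aux_coverSet_nonempty (hG : G.Connected) (r : V) {x y : V} (p : G.Walk x y) :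
    {k | CoveredBy G r p k}.Nonempty :=
  ⟨Fintype.card V, aux_coveredBy_card hG r p⟩

private lemma aux_one_le_coverNum (hG : G.Connected) (r : V) {x y : V} (p : G.Walk x y) :
    1 ≤ coverNum G r p := by
  apply le_csInf (aux_coverSet_nonempty hG r p)
  rintro k ⟨s, hcard, -, hcov⟩
  obtain ⟨q0, hq0, -⟩ := hcov x p.start_mem_support
  have : 0 < s.card := Finset.card_pos.mpr ⟨q0, hq0⟩
  omega

private lemma aux_coverNum_concat_le (hG : G.Connected) (r : V) {x u v : V}
    (q : G.Walk x u) (h : G.Adj u v) :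
    coverNum G r (q.concat h) ≤ coverNum G r q + 1 := by
  classical
  have hmem : CoveredBy G r q (coverNum G r q) := Nat.sInf_mem (aux_coverSet_nonempty hG r q)
  obtain ⟨s, hcard, hiso, hcov⟩ := hmem
  obtain ⟨R, hR1, hR2⟩ := hG.exists_path_of_dist r v
  apply Nat.sInf_le
  refine ⟨insert ⟨v, R⟩ s, le_trans (Finset.card_insert_le _ _) (by omega), ?_, ?_⟩
  · intro t ht
    rcases Finset.mem_insert.mp ht with h' | h'
    · subst h'; exact ⟨hR1, hR2⟩
    · exact hiso t h'
  · intro a ha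
    rw [SimpleGraph.Walk.support_concat, List.mem_append] at ha
    rcases ha with ha | ha
    · obtain ⟨t, ht, hat⟩ := hcov a ha
      exact ⟨t, Finset.mem_insert_of_mem ht, hat⟩
    · refine ⟨⟨v, R⟩, Finset.mem_insert_self _ _, ?_⟩
      simp only [List.mem_singleton] at ha
      subst ha
      exact R.end_mem_support

/-- Key lower bound: appending `v` at the end costs exactly one extra rooted path. -/
private lemma aux_coverNum_concat_ge (hG : G.Connected) (r : V) {x u v : V}
    (q : G.Walk x u) (hq : q.length = G.dist x u) (h : G.Adj u v)
    (hru : G.dist r u = G.dist r v) (hxv : G.dist x v = G.dist x u + 1) :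
    coverNum G r q + 1 ≤ coverNum G r (q.concat h) := by
  classical
  apply le_csInf (aux_coverSet_nonempty hG r (q.concat h))
  rintro k ⟨s, hcard, hiso, hcov⟩
  have hv : v ∈ (q.concat h).support := (q.concat h).end_mem_support
  obtain ⟨q0, hq0s, hvq0⟩ := hcov v hv
  have hdisj : ∀ a ∈ q.support, a ∉ q0.2.support := by
    intro a ha hb
    exact aux_key_disjoint hG q hq hru hxv q0.2 (hiso q0 hq0s).2 hvq0 hb ha
  have hcovq : CoveredBy G r q (k - 1) := by
    refine ⟨s.erase q0, ?_, fun t ht => hiso t (Finset.mem_of_mem_erase ht), ?_⟩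
    · rw [Finset.card_erase_of_mem hq0s]; omega
    · intro a ha
      have ha' : a ∈ (q.concat h).support := by
        rw [SimpleGraph.Walk.support_concat, List.mem_append]
        exact Or.inl ha
      obtain ⟨t, ht, hat⟩ := hcov a ha'
      refine ⟨t, Finset.mem_erase.mpr ⟨?_, ht⟩, hat⟩
      rintro rfl
      exact hdisj a ha hat
  have h1 : coverNum G r q ≤ k - 1 := Nat.sInf_le hcovq
  have h2 : 0 < s.card := Finset.card_pos.mpr ⟨q0, hq0s⟩
  omega

private lemma aux_gammaFn_le (hG : G.Connected) (r x u : V) :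
    gammaFn G r x u ≤ Fintype.card V + 1 := by
  classical
  unfold gammaFn
  split_ifs
  · omega
  · apply csSup_le'
    rintro n ⟨p, hp, rfl⟩
    have := aux_coverNum_le_card hG r p
    omega

private lemma aux_getVert_concat_length {x u v : V} (q : G.Walk x u) (h : G.Adj u v) :
    (q.concat h).getVert q.length = u := by
  rw [SimpleGraph.Walk.concat_eq_append, SimpleGraph.Walk.getVert_append]
  simp

end Aux

/-- For a connected graph with root `r`, source `x` and `v ≠ x`,
`γ→(v) = max { 1 + γ(u) : u ∈ I(x,v) ∩ N(v), d(r,u) = d(r,v) }`, with the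
convention that the maximum over the empty set is `0`. -/
theorem statement9 [Fintype V] (G : SimpleGraph V) (hG : G.Connected)
    (r x v : V) (hvx : v ≠ x) :
    gammaRight G r x v =
      sSup {m : ℕ | ∃ u : V, u ∈ interval G x v ∧ G.Adj u v ∧
        G.dist r u = G.dist r v ∧ m = 1 + gammaFn G r x u} := by
  classical
  have hBdd1 : BddAbove {n : ℕ | ∃ p : G.Walk x v, IsIsometricPath G p ∧
      G.dist r (p.getVert (p.length - 1)) = G.dist r v ∧ n = coverNum G r p} := by
    refine ⟨Fintype.card V, ?_⟩
    rintro n ⟨p, -, -, rfl⟩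
    exact aux_coverNum_le_card hG r p
  have hBdd2 : BddAbove {m : ℕ | ∃ u : V, u ∈ interval G x v ∧ G.Adj u v ∧
      G.dist r u = G.dist r v ∧ m = 1 + gammaFn G r x u} := by
    refine ⟨Fintype.card V + 2, ?_⟩
    rintro m ⟨u, -, -, -, rfl⟩
    have := aux_gammaFn_le hG r x u
    omega
  unfold gammaRight
  apply le_antisymm
  · apply csSup_le'
    rintro n ⟨p, hp, hsec, rfl⟩
    cases p with
    | nil => exact absurd rfl hvx
    | @cons _ b _ hadj q =>
      obtain ⟨y, q', h', hEq⟩ := SimpleGraph.Walk.exists_cons_eq_concat hadj q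
      rw [hEq] at hp hsec ⊢
      have hlen : q'.length + 1 = G.dist x v := by
        have := hp.2
        rwa [SimpleGraph.Walk.length_concat] at this
      rw [SimpleGraph.Walk.length_concat, Nat.add_sub_cancel,
        aux_getVert_concat_length] at hsec
      have hyv : G.dist y v = 1 := SimpleGraph.dist_eq_one_iff_adj.mpr h'
      have hxy : G.dist x y = q'.length := by
        have h1 := SimpleGraph.dist_le q'
        have h2 : G.dist x v ≤ G.dist x y + G.dist y v := hG.dist_triangle
        omega
      have hq'iso : IsIsometricPath G q' := by
        refine ⟨?_, hxy.symm⟩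
        have hpath := hp.1
        rw [SimpleGraph.Walk.concat_eq_append] at hpath
        exact hpath.of_append_left
      have hc2 : coverNum G r q' ≤ gammaFn G r x y := by
        by_cases hxy' : x = y
        · subst hxy'
          unfold gammaFn
          rw [if_pos rfl]
          obtain ⟨R, hR1, hR2⟩ := hG.exists_path_of_dist r x
          apply Nat.sInf_le
          refine ⟨{⟨x, R⟩}, by simp, ?_, ?_⟩
          · intro t ht
            rw [Finset.mem_singleton] at ht
            subst ht
            exact ⟨hR1, hR2⟩
          · intro a ha
            obtain ⟨i, hai, hiL⟩ := SimpleGraph.Walk.mem_support_iff_exists_getVert.mp ha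
            have hL0 : q'.length = 0 := by
              have := hxy
              rw [SimpleGraph.dist_self] at this
              omega
            have hi0 : i = 0 := by omega
            subst hi0
            rw [SimpleGraph.Walk.getVert_zero] at hai
            have hax : a = x := hai.symm
            subst hax
            exact ⟨⟨a, R⟩, Finset.mem_singleton_self _, R.end_mem_support⟩
        · unfold gammaFn
          rw [if_neg hxy']
          apply le_csSup
          · refine ⟨Fintype.card V, ?_⟩
            rintro n ⟨t, -, rfl⟩
            exact aux_coverNum_le_card hG r t
          · exact ⟨q', hq'iso, rfl⟩
      have hcle : coverNum G r (q'.concat h') ≤ 1 + gammaFn G r x y := by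
        have hc1 := aux_coverNum_concat_le hG r q' h'
        omega
      refine le_trans hcle (le_csSup hBdd2 ?_)
      refine ⟨y, ⟨q'.concat h', hp, ?_⟩, h', hsec, rfl⟩
      rw [SimpleGraph.Walk.support_concat, List.mem_append]
      exact Or.inl q'.end_mem_support
  · apply csSup_le'
    rintro m ⟨u, ⟨p0, hp0, hup0⟩, hadj, hdru, rfl⟩
    have hdxv : G.dist x v = G.dist x u + 1 := by
      obtain ⟨i, hgi, hiL⟩ := SimpleGraph.Walk.mem_support_iff_exists_getVert.mp hup0
      have h1 : G.dist x u = i := by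
        have := (aux_getVert_dist hG p0 hp0.2 hiL).1
        rwa [hgi] at this
      have h2 : G.dist u v = p0.length - i := by
        have := (aux_getVert_dist hG p0 hp0.2 hiL).2
        rwa [hgi] at this
      have h3 : G.dist u v = 1 := SimpleGraph.dist_eq_one_iff_adj.mpr hadj
      have h4 := hp0.2
      omega
    by_cases hxu : x = u
    · subst hxu
      have hg1 : gammaFn G r x x = 1 := by
        unfold gammaFn
        rw [if_pos rfl]
      rw [hg1]
      have hdxv1 : G.dist x v = 1 := by
        rw [SimpleGraph.dist_self] at hdxv
        omega
      have hpvlen : (SimpleGraph.Walk.cons hadj SimpleGraph.Walk.nil : G.Walk x v).length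
          = G.dist x v := by
        simp [hdxv1]
      have hpviso : IsIsometricPath G (SimpleGraph.Walk.cons hadj SimpleGraph.Walk.nil) :=
        ⟨SimpleGraph.Walk.isPath_of_length_eq_dist _ hpvlen, hpvlen⟩
      have hconcat : (SimpleGraph.Walk.nil : G.Walk x x).concat hadj
          = SimpleGraph.Walk.cons hadj SimpleGraph.Walk.nil := by
        rw [SimpleGraph.Walk.concat_eq_append, SimpleGraph.Walk.nil_append]
      have hge := aux_coverNum_concat_ge hG r (SimpleGraph.Walk.nil : G.Walk x x)
        (by simp [SimpleGraph.dist_self]) hadj hdru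
        (by rw [SimpleGraph.dist_self]; omega)
      rw [hconcat] at hge
      have h1 := aux_one_le_coverNum hG r (SimpleGraph.Walk.nil : G.Walk x x)
      have hsecpv : G.dist r ((SimpleGraph.Walk.cons hadj SimpleGraph.Walk.nil :
          G.Walk x v).getVert ((SimpleGraph.Walk.cons hadj SimpleGraph.Walk.nil :
          G.Walk x v).length - 1)) = G.dist r v := by
        simpa using hdru
      refine le_trans ?_ (le_csSup hBdd1 ⟨_, hpviso, hsecpv, rfl⟩)
      omega
    · have hbdd : BddAbove {n : ℕ | ∃ p : G.Walk x u, IsIsometricPath G p ∧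
          n = coverNum G r p} := by
        refine ⟨Fintype.card V, ?_⟩
        rintro n ⟨t, -, rfl⟩
        exact aux_coverNum_le_card hG r t
      have hne : {n : ℕ | ∃ p : G.Walk x u, IsIsometricPath G p ∧
          n = coverNum G r p}.Nonempty := by
        obtain ⟨t, ht1, ht2⟩ := hG.exists_path_of_dist x u
        exact ⟨coverNum G r t, t, ⟨ht1, ht2⟩, rfl⟩
      have hgmem : gammaFn G r x u ∈ {n : ℕ | ∃ p : G.Walk x u, IsIsometricPath G p ∧
          n = coverNum G r p} := by
        have hgdef : gammaFn G r x u = sSup {n : ℕ | ∃ p : G.Walk x u,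
            IsIsometricPath G p ∧ n = coverNum G r p} := by
          unfold gammaFn
          rw [if_neg hxu]
        rw [hgdef]
        exact Nat.sSup_mem hne hbdd
      obtain ⟨q, hqiso, hqeq⟩ := hgmem
      have hplen : (q.concat hadj).length = G.dist x v := by
        rw [SimpleGraph.Walk.length_concat, hqiso.2, hdxv]
      have hpiso : IsIsometricPath G (q.concat hadj) :=
        ⟨SimpleGraph.Walk.isPath_of_length_eq_dist _ hplen, hplen⟩
      have hsec : G.dist r ((q.concat hadj).getVert ((q.concat hadj).length - 1))
          = G.dist r v := by
        rw [SimpleGraph.Walk.length_concat, Nat.add_sub_cancel, aux_getVert_concat_length]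
        exact hdru
      have hge := aux_coverNum_concat_ge hG r q hqiso.2 hadj hdru hdxv
      rw [hqeq]
      refine le_trans ?_ (le_csSup hBdd1 ⟨_, hpiso, hsec, rfl⟩)
      omega
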